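/- Let v_1, …, v_k be pairwise non-overlapping factors of a word u over an alphabet Γ such that no letter occurs more than once within any v_i, each |v_i| ≥ (k−3)/2, and every word of length ℓ occurs at most once among all factors of length ℓ of the v_i's combined. Then u has at least k·(⌈(k−3)/2⌉ − ℓ + 1) distinct factors of length ℓ (assuming ⌈(k−3)/2⌉ ≥ ℓ), and hence g(u) ≥ k·(⌈(k−3)/2⌉ − ℓ + 1)/ℓ. -/

import Mathlib

/-- A straight-line program over alphabet `α`: nonterminals `0, ..., n-1`, each with a
single nonempty right-hand side referring only to smaller nonterminals (acyclicity). -/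
structure SLP (α : Type) where
  n : ℕ
  rhs : Fin n → List (Fin n ⊕ α)
  start : Fin n
  dec : ∀ i j, Sum.inl j ∈ rhs i → (j : ℕ) < (i : ℕ)
  ne : ∀ i, rhs i ≠ []

/-- The word derived by nonterminal `i`. -/
def SLP.val {α : Type} (G : SLP α) (i : Fin G.n) : List α :=
  ((G.rhs i).attach.map (fun s =>
    match h : s.1 with
    | Sum.inl j => G.val j
    | Sum.inr a => [a])).flatten
termination_by (i : ℕ)
decreasing_by exact G.dec i _ (h ▸ s.2)

/-- The size of an SLP: total length of all right-hand sides. -/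
def SLP.size {α : Type} (G : SLP α) : ℕ := ∑ i, (G.rhs i).length

def SLP.produces {α : Type} (G : SLP α) (w : List α) : Prop := G.val G.start = w

/-- `gsize w` is the size of a smallest SLP producing `w`. -/
noncomputable def gsize {α : Type} (w : List α) : ℕ :=
  sInf {s | ∃ G : SLP α, G.produces w ∧ G.size = s}

/-- The number of occurrences (starting positions) of `x` as a factor of `w`. -/
def countOcc {σ : Type} [DecidableEq σ] (x w : List σ) : ℕ :=
  ((List.range (w.length + 1)).filter (fun i => (w.drop i).take x.length = x)).length

def SLP.expand {α : Type} (G : SLP α) : (Fin G.n ⊕ α) → List α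
  | Sum.inl j => G.val j
  | Sum.inr a => [a]

lemma SLP.val_eq {α : Type} (G : SLP α) (i : Fin G.n) :
    G.val i = ((G.rhs i).map G.expand).flatten := by
  rw [SLP.val, ← List.attach_map_val (l := G.rhs i) (f := G.expand)]
  congr 1
  apply List.map_congr_left
  intro s _
  split <;> rename_i h <;> simp [SLP.expand, h]

def cumf {α : Type} (L : List (List α)) (t : ℕ) : ℕ := ((L.map List.length).take t).sum

lemma cumf_le {α : Type} (L : List (List α)) (t : ℕ) : cumf L t ≤ L.flatten.length := by
  rw [List.length_flatten, ← List.sum_take_add_sum_drop (L.map List.length) t]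
  exact Nat.le_add_right _ _

lemma cumf_succ {α : Type} (L : List (List α)) (t : ℕ) (h : t < L.length) :
    cumf L (t + 1) = cumf L t + L[t].length := by
  have := List.sum_take_succ (L.map List.length) t (by simpa using h)
  simpa [cumf] using this

lemma cumf_full {α : Type} (L : List (List α)) : cumf L L.length = L.flatten.length := by
  simp [cumf, List.take_of_length_le, List.length_flatten]

lemma drop_cumf {α : Type} (L : List (List α)) (t : ℕ) :
    L.flatten.drop (cumf L t) = (L.drop t).flatten := by
  induction L generalizing t with
  | nil => simp [cumf]
  | cons a L ih =>
    cases t with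
    | zero => simp [cumf]
    | succ t =>
      simp only [cumf, List.map_cons, List.take_succ_cons, List.sum_cons, List.flatten_cons,
        List.drop_succ_cons]
      rw [← List.drop_drop, List.drop_left' rfl]
      exact ih t

lemma window {α : Type} (L : List (List α)) (p ℓ : ℕ) (hℓ : 1 ≤ ℓ)
    (hp : p + ℓ ≤ L.flatten.length) :
    (∃ t : ℕ, ∃ ht : t < L.length, cumf L t ≤ p ∧ p + ℓ ≤ cumf L t + L[t].length) ∨
    (∃ t : ℕ, t < L.length ∧ p < cumf L t ∧ cumf L t < p + ℓ) := by
  classical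
  set t0 := Nat.findGreatest (fun t => cumf L t ≤ p) L.length with ht0
  have h0 : cumf L t0 ≤ p := by
    rw [ht0]
    exact Nat.findGreatest_spec (P := fun t => cumf L t ≤ p) (m := 0) (Nat.zero_le _)
      (by simp [cumf])
  have ht0le : t0 ≤ L.length := Nat.findGreatest_le _
  have ht0lt : t0 < L.length := by
    rcases Nat.lt_or_ge t0 L.length with h | h
    · exact h
    · exfalso
      have : t0 = L.length := le_antisymm ht0le h
      rw [this, cumf_full] at h0
      omega
  have hmax : p < cumf L (t0 + 1) := by
    by_contra hcon
    have := Nat.findGreatest_is_greatest (P := fun t => cumf L t ≤ p) (k := t0 + 1)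
      (by rw [← ht0]; omega) ht0lt
    omega
  rcases le_or_gt (p + ℓ) (cumf L (t0 + 1)) with h | h
  · left
    exact ⟨t0, ht0lt, h0, by rwa [← cumf_succ L t0 ht0lt]⟩
  · right
    refine ⟨t0 + 1, ?_, hmax, h⟩
    rcases Nat.lt_or_ge (t0 + 1) L.length with h' | h'
    · exact h'
    · exfalso
      have h1 : L.length ≤ t0 + 1 := h'
      have : cumf L (t0 + 1) = L.flatten.length := by
        have : t0 + 1 = L.length := by omega
        rw [this, cumf_full]
      omega

lemma infix_of_inside {α : Type} (L : List (List α)) (p ℓ t : ℕ) (ht : t < L.length)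
    (h1 : cumf L t ≤ p) (h2 : p + ℓ ≤ cumf L t + L[t].length) :
    (L.flatten.drop p).take ℓ <:+: L[t] := by
  have e1 : L.flatten.drop p = (L.flatten.drop (cumf L t)).drop (p - cumf L t) := by
    rw [List.drop_drop]
    congr 1
    omega
  rw [e1, drop_cumf, List.drop_eq_getElem_cons ht, List.flatten_cons]
  set q := p - cumf L t with hq
  have hq1 : q ≤ L[t].length := by omega
  have hq2 : ℓ ≤ L[t].length - q := by omega
  rw [List.drop_append_of_le_length hq1, List.take_append_of_le_length (by simpa using hq2)]
  exact ((List.take_prefix _ _).isInfix).trans ((List.drop_suffix _ _).isInfix)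

lemma infix_take_drop {α : Type} {x w : List α} (h : x <:+: w) :
    ∃ p, p + x.length ≤ w.length ∧ x = (w.drop p).take x.length := by
  obtain ⟨s, t, rfl⟩ := h
  refine ⟨s.length, by simp, ?_⟩
  rw [List.append_assoc, List.drop_append_of_le_length le_rfl, List.drop_length, List.nil_append,
    List.take_append_of_le_length le_rfl, List.take_length]

noncomputable def slpWin {α : Type} (G : SLP α) (ℓ : ℕ)
    (p : Σ i : Fin G.n, Fin (G.rhs i).length × Fin ℓ) : List α :=
  ((G.val p.1).drop (cumf ((G.rhs p.1).map G.expand) p.2.1 - p.2.2)).take ℓ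

lemma slp_factor_mem {α : Type} (G : SLP α) (ℓ : ℕ) (hℓ : 1 ≤ ℓ) (i : Fin G.n)
    (x : List α) (hx : x.length = ℓ) (hinf : x <:+: G.val i) :
    x ∈ Set.range (slpWin G ℓ) := by
  obtain ⟨N, hN⟩ : ∃ N, (i : ℕ) = N := ⟨_, rfl⟩
  induction N using Nat.strong_induction_on generalizing i x with
  | _ N IH =>
  subst hN
  obtain ⟨p, hp, hxe⟩ := infix_take_drop hinf
  rw [hx] at hp hxe
  set L : List (List α) := (G.rhs i).map G.expand with hL
  have hvL : G.val i = L.flatten := G.val_eq i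
  have hLlen : L.length = (G.rhs i).length := by simp [hL]
  rw [hvL] at hp
  rcases window L p ℓ hℓ hp with ⟨t, ht, h1, h2⟩ | ⟨t, ht, h1, h2⟩
  · -- inside symbol t
    have hgt : L[t] = G.expand ((G.rhs i)[t]'(hLlen ▸ ht)) := by
      simp [hL]
    have hinside : x <:+: L[t] := by
      rw [hxe, hvL]
      exact infix_of_inside L p ℓ t ht h1 h2
    rcases hrt : (G.rhs i)[t]'(hLlen ▸ ht) with j | a
    · -- nonterminal
      have hj : (j : ℕ) < (i : ℕ) := G.dec i j (by
        rw [← hrt]; exact List.getElem_mem _)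
      refine IH (j : ℕ) hj j x hx ?_ rfl
      rw [hgt, hrt] at hinside
      exact hinside
    · -- terminal
      have hlen1 : L[t].length = 1 := by rw [hgt, hrt]; rfl
      have hℓ1 : ℓ = 1 ∧ p = cumf L t := by omega
      refine ⟨⟨i, ⟨t, hLlen ▸ ht⟩, ⟨0, by omega⟩⟩, ?_⟩
      show ((G.val i).drop (cumf ((G.rhs i).map G.expand) t - 0)).take ℓ = x
      rw [hxe, ← hL]
      have he : cumf L t - 0 = p := by omega
      rw [he]
  · -- crossing boundary t
    refine ⟨⟨i, ⟨t, hLlen ▸ ht⟩, ⟨cumf L t - p, by omega⟩⟩, ?_⟩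
    show ((G.val i).drop (cumf ((G.rhs i).map G.expand) t - (cumf L t - p))).take ℓ = x
    rw [hxe, ← hL]
    have he : cumf L t - (cumf L t - p) = p := by omega
    rw [he]

lemma slp_factors_le {α : Type} (G : SLP α) (ℓ : ℕ) (hℓ : 1 ≤ ℓ) :
    {x : List α | x.length = ℓ ∧ x <:+: G.val G.start}.ncard ≤ G.size * ℓ := by
  classical
  have hsub : {x : List α | x.length = ℓ ∧ x <:+: G.val G.start} ⊆ Set.range (slpWin G ℓ) :=
    fun x ⟨h1, h2⟩ => slp_factor_mem G ℓ hℓ G.start x h1 h2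
  calc {x : List α | x.length = ℓ ∧ x <:+: G.val G.start}.ncard
      ≤ (Set.range (slpWin G ℓ)).ncard := Set.ncard_le_ncard hsub (Set.finite_range _)
    _ ≤ G.size * ℓ := by
        rw [← Set.image_univ, ← Finset.coe_univ, ← Finset.coe_image, Set.ncard_coe_finset]
        calc (Finset.univ.image (slpWin G ℓ)).card
            ≤ Finset.univ.card := Finset.card_image_le
          _ = G.size * ℓ := by
              simp [Finset.card_univ, SLP.size, Finset.sum_mul]

lemma flatten_singletons {α : Type} (u : List α) : (u.map (fun a => [a])).flatten = u := by
  induction u <;> simp [*]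

def trivSLP {α : Type} (u : List α) (hu : u ≠ []) : SLP α where
  n := 1
  rhs := fun _ => u.map Sum.inr
  start := ⟨0, Nat.one_pos⟩
  dec := by intro i j hj; simp at hj
  ne := by intro i; simpa using hu

lemma trivSLP_produces {α : Type} (u : List α) (hu : u ≠ []) :
    SLP.produces (trivSLP u hu) u := by
  rw [SLP.produces, SLP.val_eq]
  show ((u.map Sum.inr).map (trivSLP u hu).expand).flatten = u
  rw [List.map_map]
  have : (trivSLP u hu).expand ∘ Sum.inr = fun a => [a] := rfl
  rw [this, flatten_singletons]

lemma gsize_attained {α : Type} (u : List α) (hu : u ≠ []) :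
    ∃ G : SLP α, G.produces u ∧ G.size = gsize u := by
  have hne : {s | ∃ G : SLP α, G.produces u ∧ G.size = s}.Nonempty :=
    ⟨(trivSLP u hu).size, trivSLP u hu, trivSLP_produces u hu, rfl⟩
  exact Nat.sInf_mem hne

lemma countOcc_pos {σ : Type} [DecidableEq σ] (x w : List σ) (j : ℕ)
    (hj : j ≤ w.length) (h : (w.drop j).take x.length = x) : 1 ≤ countOcc x w := by
  have hmem : j ∈ (List.range (w.length + 1)).filter
      (fun i => (w.drop i).take x.length = x) := by
    simp only [List.mem_filter, List.mem_range, decide_eq_true_eq]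
    exact ⟨by omega, h⟩
  exact List.length_pos_iff.mpr (List.ne_nil_of_mem hmem)

lemma countOcc_two {σ : Type} [DecidableEq σ] (x w : List σ) (j j' : ℕ) (hne : j ≠ j')
    (hj : j ≤ w.length) (hj' : j' ≤ w.length)
    (h : (w.drop j).take x.length = x) (h' : (w.drop j').take x.length = x) :
    2 ≤ countOcc x w := by
  classical
  set l := (List.range (w.length + 1)).filter
      (fun i => (w.drop i).take x.length = x) with hl
  have hnd : l.Nodup := List.nodup_range.filter _
  have hmem : j ∈ l := by
    simp only [hl, List.mem_filter, List.mem_range, decide_eq_true_eq]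
    exact ⟨by omega, h⟩
  have hmem' : j' ∈ l := by
    simp only [hl, List.mem_filter, List.mem_range, decide_eq_true_eq]
    exact ⟨by omega, h'⟩
  have hsub : ({j, j'} : Finset ℕ) ⊆ l.toFinset := by
    intro a ha
    simp only [Finset.mem_insert, Finset.mem_singleton] at ha
    rcases ha with rfl | rfl <;> simpa using ‹_ ∈ l›
  have : ({j, j'} : Finset ℕ).card ≤ l.toFinset.card := Finset.card_le_card hsub
  rwa [Finset.card_pair hne, List.toFinset_card_of_nodup hnd] at this

/-- If `v 1, …, v k` are pairwise non-overlapping factors of `u` (occurring at positions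
`pos i`), no letter repeats inside any `v i`, each `|v i| ≥ (k-3)/2`, and every word of
length `ℓ` occurs at most once among all factors of length `ℓ` of the `v i` combined,
then (with `c = ⌈(k-3)/2⌉ = (k-2)/2`, assuming `ℓ ≤ c`) `u` has at least
`k·(c - ℓ + 1)` distinct factors of length `ℓ`, and hence `g(u) ≥ k·(c - ℓ + 1)/ℓ`. -/
theorem repair_stmt_9 {Γ : Type} [DecidableEq Γ] (u : List Γ) (k ℓ : ℕ)
    (hk : 3 ≤ k) (hℓ : 1 ≤ ℓ) (v : ℕ → List Γ) (pos : ℕ → ℕ)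
    (hocc : ∀ i, 1 ≤ i → i ≤ k → (u.drop (pos i)).take (v i).length = v i)
    (hdisj : ∀ i j, 1 ≤ i → i < j → j ≤ k → pos i + (v i).length ≤ pos j)
    (hnodup : ∀ i, 1 ≤ i → i ≤ k → (v i).Nodup)
    (hlen : ∀ i, 1 ≤ i → i ≤ k → k - 3 ≤ 2 * (v i).length)
    (huniq : ∀ x : List Γ, x.length = ℓ → (∑ i ∈ Finset.Icc 1 k, countOcc x (v i)) ≤ 1)
    (hc : ℓ ≤ (k - 2) / 2) :
    k * ((k - 2) / 2 - ℓ + 1) ≤ {x : List Γ | x.length = ℓ ∧ x <:+: u}.ncard ∧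
    k * ((k - 2) / 2 - ℓ + 1) ≤ gsize u * ℓ := by
  classical
  set c := (k - 2) / 2 with hcdef
  set S := {x : List Γ | x.length = ℓ ∧ x <:+: u} with hS
  have hvlen : ∀ i, 1 ≤ i → i ≤ k → c ≤ (v i).length := by
    intro i h1 h2
    have := hlen i h1 h2
    omega
  have hvinf : ∀ i, 1 ≤ i → i ≤ k → v i <:+: u := by
    intro i h1 h2
    conv_lhs => rw [← hocc i h1 h2]
    exact ((List.take_prefix _ _).isInfix).trans ((List.drop_suffix _ _).isInfix)
  set ψ : ℕ × ℕ → List Γ := fun p => ((v p.1).drop p.2).take ℓ with hψ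
  set P : Finset (ℕ × ℕ) := Finset.Icc 1 k ×ˢ Finset.range (c - ℓ + 1) with hP
  have hPmem : ∀ p : ℕ × ℕ, p ∈ P → 1 ≤ p.1 ∧ p.1 ≤ k ∧ p.2 + ℓ ≤ (v p.1).length := by
    intro p hp
    simp only [hP, Finset.mem_product, Finset.mem_Icc, Finset.mem_range] at hp
    have := hvlen p.1 hp.1.1 hp.1.2
    exact ⟨hp.1.1, hp.1.2, by omega⟩
  have hψlen : ∀ p ∈ P, (ψ p).length = ℓ := by
    intro p hp
    obtain ⟨h1, h2, h3⟩ := hPmem p hp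
    simp only [hψ, List.length_take, List.length_drop]
    omega
  have hψcnt : ∀ p ∈ P, ∀ x : List Γ, x.length = ℓ → ψ p = x →
      ((v p.1).drop p.2).take x.length = x := by
    intro p hp x hx hpx
    rw [hx, ← hpx]
  have hinj : Set.InjOn ψ ↑P := by
    intro p hp q hq hpq
    obtain ⟨hp1, hp2, hp3⟩ := hPmem p hp
    obtain ⟨hq1, hq2, hq3⟩ := hPmem q hq
    set x := ψ p with hx
    have hxlen : x.length = ℓ := hψlen p hp
    have hsum := huniq x hxlen
    have hcp : ((v p.1).drop p.2).take x.length = x := hψcnt p hp x hxlen rfl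
    have hcq : ((v q.1).drop q.2).take x.length = x := hψcnt q hq x hxlen hpq.symm
    by_contra hne
    rcases eq_or_ne p.1 q.1 with h1 | h1
    · have h2 : p.2 ≠ q.2 := by
        intro h2
        exact hne (Prod.ext h1 h2)
      rw [← h1] at hcq hq3
      have h2c : 2 ≤ countOcc x (v p.1) :=
        countOcc_two x (v p.1) p.2 q.2 h2 (by omega) (by omega) hcp hcq
      have : countOcc x (v p.1) ≤ ∑ i ∈ Finset.Icc 1 k, countOcc x (v i) :=
        Finset.single_le_sum (f := fun i => countOcc x (v i)) (fun i _ => Nat.zero_le _)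
          (Finset.mem_Icc.mpr ⟨hp1, hp2⟩)
      omega
    · have c1 : 1 ≤ countOcc x (v p.1) :=
        countOcc_pos x (v p.1) p.2 (by omega) hcp
      have c2 : 1 ≤ countOcc x (v q.1) :=
        countOcc_pos x (v q.1) q.2 (by omega) hcq
      have : countOcc x (v p.1) + countOcc x (v q.1) ≤
          ∑ i ∈ Finset.Icc 1 k, countOcc x (v i) :=
        Finset.add_le_sum (f := fun i => countOcc x (v i)) (fun i _ => Nat.zero_le _)
          (Finset.mem_Icc.mpr ⟨hp1, hp2⟩) (Finset.mem_Icc.mpr ⟨hq1, hq2⟩) h1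
      omega
  set T : Finset (List Γ) := P.image ψ with hT
  have hTcard : T.card = k * (c - ℓ + 1) := by
    rw [hT, Finset.card_image_of_injOn hinj, hP, Finset.card_product, Nat.card_Icc,
      Finset.card_range]
    congr 1
  have hTsub : ↑T ⊆ S := by
    intro x hx
    simp only [hT, Finset.coe_image, Set.mem_image, Finset.mem_coe] at hx
    obtain ⟨p, hp, rfl⟩ := hx
    obtain ⟨h1, h2, h3⟩ := hPmem p hp
    refine ⟨hψlen p hp, ?_⟩
    have : ψ p <:+: v p.1 :=
      ((List.take_prefix _ _).isInfix).trans ((List.drop_suffix _ _).isInfix)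
    exact this.trans (hvinf p.1 h1 h2)
  have hSfin : S.Finite := by
    apply Set.Finite.subset (((Finset.range (u.length + 1)).image
      (fun p => (u.drop p).take ℓ)).finite_toSet)
    intro x ⟨hx1, hx2⟩
    obtain ⟨p, hp, hxe⟩ := infix_take_drop hx2
    simp only [Finset.coe_image, Set.mem_image, Finset.mem_coe, Finset.mem_range]
    exact ⟨p, by omega, by rw [← hx1, ← hxe]⟩
  have part1 : k * (c - ℓ + 1) ≤ S.ncard := by
    rw [← hTcard, ← Set.ncard_coe_finset]
    exact Set.ncard_le_ncard hTsub hSfin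
  refine ⟨part1, ?_⟩
  have hk4 : 4 ≤ k := by omega
  have hv1 : v 1 ≠ [] := by
    have := hvlen 1 le_rfl (by omega)
    intro h
    rw [h] at this
    simp at this
    omega
  have hu : u ≠ [] := by
    intro h
    apply hv1
    have hinf := hvinf 1 le_rfl (by omega)
    rw [h] at hinf
    exact List.eq_nil_of_infix_nil hinf
  obtain ⟨G, hGp, hGs⟩ := gsize_attained u hu
  have hfin := slp_factors_le G ℓ hℓ
  rw [SLP.produces] at hGp
  rw [hGp, hGs] at hfin
  exact le_trans part1 hfin
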